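/- arXiv:0709.3374 — 2 statements merged into one kernel-verified Lean document; each statement's English description precedes it below -/
import Mathlib

section
/- Let k > 2 be an integer, let F and F* be defining series with tube model, and let Φ = (φ, ψ) be a formal transformation mapping F to F*. Then there exist a unique real number δ ≠ 0 and a unique normalizing transformation (z + f, w + g) such that φ(z,w) = δ·(z + f(z,w)) and ψ(z,w) = δ^k·(w + g(z,w)). -/
noncomputable section

open MvPowerSeries Finsupp

/-- Formal substitution of the family `a` into `f`, defined coefficientwise by a `finsum`
(which has the correct value whenever each `a i` has zero constant term). -/
def mSubst {σ τ R : Type*} [CommSemiring R] (a : σ → MvPowerSeries τ R)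
    (f : MvPowerSeries σ R) : MvPowerSeries τ R :=
  fun d => finsum fun e : σ →₀ ℕ =>
    MvPowerSeries.coeff (R := R) e f * MvPowerSeries.coeff (R := R) d (e.prod fun i n => (a i) ^ n)

/-- Coefficientwise real part. -/
def reP {σ : Type*} (h : MvPowerSeries σ ℂ) : MvPowerSeries σ ℝ :=
  fun d => (MvPowerSeries.coeff (R := ℂ) d h).re

/-- Coefficientwise imaginary part. -/
def imP {σ : Type*} (h : MvPowerSeries σ ℂ) : MvPowerSeries σ ℝ :=
  fun d => (MvPowerSeries.coeff (R := ℂ) d h).im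

/-- Complexification of a real power series. -/
def toC {σ : Type*} (F : MvPowerSeries σ ℝ) : MvPowerSeries σ ℂ :=
  MvPowerSeries.map (σ := σ) Complex.ofRealHom F

/-- The coefficient of `x^j y^l u^m` in `F ∈ ℝ⟦x,y,u⟧`. -/
def cf3 (F : MvPowerSeries (Fin 3) ℝ) (j l m : ℕ) : ℝ :=
  MvPowerSeries.coeff (R := ℝ) (single 0 j + single 1 l + single 2 m) F

/-- The coefficient of `z^j w^m` in `h ∈ ℂ⟦z,w⟧`. -/
def cf2 (h : MvPowerSeries (Fin 2) ℂ) (j m : ℕ) : ℂ :=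
  MvPowerSeries.coeff (R := ℂ) (single 0 j + single 1 m) h

/-- The family `(x+iy, u+iF)` to be substituted into series in `ℂ⟦z,w⟧`. -/
def tubeFam (F : MvPowerSeries (Fin 3) ℝ) : Fin 2 → MvPowerSeries (Fin 3) ℂ :=
  ![X 0 + MvPowerSeries.C (σ := Fin 3) (R := ℂ) Complex.I * X 1,
    X 2 + MvPowerSeries.C (σ := Fin 3) (R := ℂ) Complex.I * toC F]

/-- `(φ,ψ)` maps the series `F` to the series `F*`:
`F*(Re φ(x+iy,u+iF), Im φ(x+iy,u+iF), Re ψ(x+iy,u+iF)) = Im ψ(x+iy,u+iF)`. -/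
def MapsSeries (F Fs : MvPowerSeries (Fin 3) ℝ) (φ ψ : MvPowerSeries (Fin 2) ℂ) : Prop :=
  mSubst ![reP (mSubst (tubeFam F) φ), imP (mSubst (tubeFam F) φ),
           reP (mSubst (tubeFam F) ψ)] Fs
    = imP (mSubst (tubeFam F) ψ)

/-- `(φ,ψ)` is a formal transformation: zero constant terms and invertible Jacobian at `0`. -/
def IsFormalTransf (φ ψ : MvPowerSeries (Fin 2) ℂ) : Prop :=
  cf2 φ 0 0 = 0 ∧ cf2 ψ 0 0 = 0 ∧
  cf2 φ 1 0 * cf2 ψ 0 1 - cf2 φ 0 1 * cf2 ψ 1 0 ≠ 0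

/-- `F` is a defining series with tube model:
`F = x^k + Σ_{j+l+km ≥ k+1} A_{j,l,m} x^j y^l u^m`. -/
def IsDefining (k : ℕ) (F : MvPowerSeries (Fin 3) ℝ) : Prop :=
  ∀ j l m : ℕ, j + l + k * m ≤ k →
    cf3 F j l m = if j = k ∧ l = 0 ∧ m = 0 then 1 else 0

/-- `F` is in t-normal form. -/
def IsTNormal (k : ℕ) (F : MvPowerSeries (Fin 3) ℝ) : Prop :=
  (∀ j l m : ℕ, k + 1 ≤ j + l + k * m → (j = 0 ∨ j = 1 ∨ j = k - 1 ∨ j = k) →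
      cf3 F j l m = 0) ∧
  (∀ m : ℕ, cf3 F (2 * k - 1) 0 m = 0 ∧ cf3 F (2 * k - 1) 1 m = 0)

/-- `(φ,ψ) = (z+f, w+g)` is a normalizing transformation: `f` contains only terms of
weight `≥ 2` and `g` only terms of weight `≥ k+1`. -/
def IsNormalizing (k : ℕ) (φ ψ : MvPowerSeries (Fin 2) ℂ) : Prop :=
  (∀ j m : ℕ, j + k * m ≤ 1 → cf2 φ j m = if j = 1 ∧ m = 0 then 1 else 0) ∧
  (∀ j m : ℕ, j + k * m ≤ k → cf2 ψ j m = if j = 0 ∧ m = 1 then 1 else 0)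

/-- weighted degree on 3 variables: weights (1,1,k) -/
def wt3 (k : ℕ) (d : Fin 3 →₀ ℕ) : ℕ := d 0 + d 1 + k * d 2

lemma wt3_add (k : ℕ) (d e : Fin 3 →₀ ℕ) : wt3 k (d + e) = wt3 k d + wt3 k e := by
  simp [wt3]; ring

lemma fin3_decomp (d : Fin 3 →₀ ℕ) :
    d = single 0 (d 0) + single 1 (d 1) + single 2 (d 2) := by
  ext i
  fin_cases i <;> simp [Finsupp.single_apply]

lemma fin2_decomp (e : Fin 2 →₀ ℕ) : e = single 0 (e 0) + single 1 (e 1) := by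
  ext i
  fin_cases i <;> simp [Finsupp.single_apply]

lemma fin3_eq_iff (d : Fin 3 →₀ ℕ) (a b c : ℕ) :
    d = single 0 a + single 1 b + single 2 c ↔ d 0 = a ∧ d 1 = b ∧ d 2 = c := by
  constructor
  · rintro rfl; simp [Finsupp.single_apply]
  · rintro ⟨h1, h2, h3⟩; rw [fin3_decomp d, h1, h2, h3]

/-- weighted order lower bound -/
def Lb {R : Type*} [Semiring R] (k n : ℕ) (f : MvPowerSeries (Fin 3) R) : Prop :=
  ∀ d, wt3 k d < n → MvPowerSeries.coeff (R := R) d f = 0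

lemma Lb_zero {R : Type*} [Semiring R] (k : ℕ) (f : MvPowerSeries (Fin 3) R) : Lb k 0 f :=
  fun _ h => absurd h (Nat.not_lt_zero _)

lemma Lb.mul {R : Type*} [Semiring R] {k p q : ℕ} {f g : MvPowerSeries (Fin 3) R}
    (hf : Lb k p f) (hg : Lb k q g) : Lb k (p + q) (f * g) := by
  intro d hd
  rw [MvPowerSeries.coeff_mul]
  apply Finset.sum_eq_zero
  rintro ⟨u, v⟩ huv
  rw [Finset.HasAntidiagonal.mem_antidiagonal] at huv
  have : wt3 k u + wt3 k v < p + q := by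
    rw [← wt3_add, huv]; exact hd
  rcases Nat.lt_or_ge (wt3 k u) p with h | h
  · rw [hf u h, zero_mul]
  · rw [hg v (by omega), mul_zero]

lemma Lb.pow {R : Type*} [CommSemiring R] {k p : ℕ} {f : MvPowerSeries (Fin 3) R}
    (hf : Lb k p f) (n : ℕ) : Lb k (n * p) (f ^ n) := by
  induction n with
  | zero => rw [Nat.zero_mul]; exact Lb_zero k _
  | succ n ih =>
      have h : (n + 1) * p = n * p + p := by ring
      rw [pow_succ, h]
      exact ih.mul hf

lemma coeff_linpow {R : Type*} [CommRing R] (c0 c1 : R) (n : ℕ) (d : Fin 3 →₀ ℕ) :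
    MvPowerSeries.coeff (R := R) d ((MvPowerSeries.C (σ := Fin 3) (R := R) c0 * X 0
        + MvPowerSeries.C (σ := Fin 3) (R := R) c1 * X 1) ^ n) =
    if d 0 + d 1 = n ∧ d 2 = 0 then (n.choose (d 1) : R) * c0 ^ (d 0) * c1 ^ (d 1) else 0 := by
  have hterm : ∀ m : ℕ, (MvPowerSeries.C (σ := Fin 3) (R := R) c0 * X 0) ^ m *
      (MvPowerSeries.C (σ := Fin 3) (R := R) c1 * X 1) ^ (n - m) * ((n.choose m : ℕ) : MvPowerSeries (Fin 3) R)
      = MvPowerSeries.monomial (R := R) (single 0 m + single 1 (n - m))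
          ((n.choose m : R) * c0 ^ m * c1 ^ (n - m)) := by
    intro m
    rw [mul_pow, mul_pow, ← map_pow, ← map_pow, X_pow_eq, X_pow_eq,
      ← map_natCast (MvPowerSeries.C (σ := Fin 3) (R := R)) (n.choose m)]
    have hC : ∀ a : R, MvPowerSeries.C (σ := Fin 3) (R := R) a = MvPowerSeries.monomial (R := R) 0 a := fun a => rfl
    rw [hC, hC, hC, monomial_mul_monomial, monomial_mul_monomial, monomial_mul_monomial,
      monomial_mul_monomial]
    congr 1
    · ext i; simp
    · ring
  rw [add_pow]
  rw [map_sum]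
  have hco : ∀ m ∈ Finset.range (n + 1),
      MvPowerSeries.coeff (R := R) d ((MvPowerSeries.C (σ := Fin 3) (R := R) c0 * X 0) ^ m *
        (MvPowerSeries.C (σ := Fin 3) (R := R) c1 * X 1) ^ (n - m) * ((n.choose m : ℕ) : MvPowerSeries (Fin 3) R))
      = if d = single 0 m + single 1 (n - m) then (n.choose m : R) * c0 ^ m * c1 ^ (n - m) else 0 := by
    intro m _
    rw [hterm, coeff_monomial]
  rw [Finset.sum_congr rfl hco]
  by_cases hcond : d 0 + d 1 = n ∧ d 2 = 0
  · rw [if_pos hcond]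
    obtain ⟨h1, h2⟩ := hcond
    rw [Finset.sum_eq_single_of_mem (d 0) (by simp only [Finset.mem_range]; omega)]
    · have hd1 : n - d 0 = d 1 := by omega
      have hd : d = single 0 (d 0) + single 1 (n - d 0) := by
        have h3 := fin3_decomp d
        rw [h2] at h3
        simp only [Finsupp.single_zero, add_zero] at h3
        rw [hd1]; exact h3
      rw [if_pos hd]
      rw [hd1, ← hd1, Nat.choose_symm (by omega : d 0 ≤ n), hd1]
    · intro m _ hm
      rw [if_neg]
      intro hd
      apply hm
      have : d 0 = (single 0 m + single 1 (n - m) : Fin 3 →₀ ℕ) 0 := by rw [← hd]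
      simpa [Finsupp.single_apply] using this.symm
  · rw [if_neg hcond]
    apply Finset.sum_eq_zero
    intro m hm
    rw [if_neg]
    intro hd
    apply hcond
    rw [hd]
    simp only [Finsupp.add_apply, Finsupp.single_apply]
    norm_num
    simp at hm
    omega

/-! ### the two substituted variables -/

def zs : MvPowerSeries (Fin 3) ℂ :=
  X 0 + MvPowerSeries.C (σ := Fin 3) (R := ℂ) Complex.I * X 1

def ws (F : MvPowerSeries (Fin 3) ℝ) : MvPowerSeries (Fin 3) ℂ :=
  X 2 + MvPowerSeries.C (σ := Fin 3) (R := ℂ) Complex.I * toC F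

lemma tubeFam_zero (F : MvPowerSeries (Fin 3) ℝ) : tubeFam F 0 = zs := rfl
lemma tubeFam_one (F : MvPowerSeries (Fin 3) ℝ) : tubeFam F 1 = ws F := rfl

lemma coeff_zs_pow (n : ℕ) (d : Fin 3 →₀ ℕ) :
    MvPowerSeries.coeff (R := ℂ) d (zs ^ n) =
    if d 0 + d 1 = n ∧ d 2 = 0 then (n.choose (d 1) : ℂ) * Complex.I ^ (d 1) else 0 := by
  have h : zs = MvPowerSeries.C (σ := Fin 3) (R := ℂ) 1 * X 0 + MvPowerSeries.C (σ := Fin 3) (R := ℂ) Complex.I * X 1 := by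
    rw [map_one, one_mul]; rfl
  rw [h, coeff_linpow]
  simp

lemma coeff_toC (F : MvPowerSeries (Fin 3) ℝ) (d : Fin 3 →₀ ℕ) :
    MvPowerSeries.coeff (R := ℂ) d (toC F) = (MvPowerSeries.coeff (R := ℝ) d F : ℂ) := by
  simp [toC, MvPowerSeries.coeff_map]

lemma coeff_eq_cf3 (F : MvPowerSeries (Fin 3) ℝ) (d : Fin 3 →₀ ℕ) :
    MvPowerSeries.coeff (R := ℝ) d F = cf3 F (d 0) (d 1) (d 2) := by
  rw [cf3, ← fin3_decomp]

lemma coeff_ws {k : ℕ} (hk : 0 < k) {F : MvPowerSeries (Fin 3) ℝ} (hF : IsDefining k F)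
    (d : Fin 3 →₀ ℕ) (hd : wt3 k d ≤ k) :
    MvPowerSeries.coeff (R := ℂ) d (ws F) =
      if d = single 2 1 then 1 else if d = single 0 k then Complex.I else 0 := by
  have hFd : MvPowerSeries.coeff (R := ℝ) d F
      = if d 0 = k ∧ d 1 = 0 ∧ d 2 = 0 then (1:ℝ) else 0 := by
    rw [coeff_eq_cf3]
    exact hF (d 0) (d 1) (d 2) (by simpa [wt3] using hd)
  rw [ws, map_add, coeff_C_mul, coeff_toC, hFd, MvPowerSeries.coeff_X]
  by_cases h1 : d = single 2 1
  · rw [if_pos h1, if_pos h1]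
    rw [if_neg, Complex.ofReal_zero, mul_zero, add_zero]
    rintro ⟨ha, -, -⟩
    rw [h1] at ha
    simp [Finsupp.single_apply] at ha
    omega
  · rw [if_neg h1, if_neg h1]
    by_cases h2 : d = single 0 k
    · rw [if_pos h2, if_pos, Complex.ofReal_one, mul_one, zero_add]
      rw [h2]
      refine ⟨?_, ?_, ?_⟩ <;> simp [Finsupp.single_apply]
    · rw [if_neg h2, if_neg, Complex.ofReal_zero, mul_zero, add_zero]
      rintro ⟨ha, hb, hc⟩
      apply h2
      rw [fin3_decomp d, ha, hb, hc]
      simp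

/-! ### lower bounds for the substituted series -/

lemma lb_ws {k : ℕ} (hk : 0 < k) {F : MvPowerSeries (Fin 3) ℝ} (hF : IsDefining k F) :
    Lb k k (ws F) := by
  intro d hd
  rw [coeff_ws hk hF d (le_of_lt hd)]
  rw [if_neg, if_neg]
  · intro h; rw [h] at hd; simp [wt3, Finsupp.single_apply] at hd
  · intro h; rw [h] at hd; simp [wt3, Finsupp.single_apply] at hd

lemma wt3_single0 (k n : ℕ) : wt3 k (single 0 n) = n := by
  simp [wt3, Finsupp.single_apply]

lemma prod_tubeFam (F : MvPowerSeries (Fin 3) ℝ) (e : Fin 2 →₀ ℕ) :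
    (e.prod fun i n => (tubeFam F i) ^ n) = zs ^ (e 0) * (ws F) ^ (e 1) := by
  rw [Finsupp.prod_fintype _ _ (fun i => pow_zero _), Fin.prod_univ_two,
    tubeFam_zero, tubeFam_one]

lemma cf2_eq_coeff (h : MvPowerSeries (Fin 2) ℂ) (e : Fin 2 →₀ ℕ) :
    MvPowerSeries.coeff (R := ℂ) e h = cf2 h (e 0) (e 1) := by
  rw [cf2, ← fin2_decomp]

/-- The main evaluation of a substituted 2-variable series at low weighted degree. -/
lemma coeff_subst2 {k : ℕ} (hk : 0 < k) {F : MvPowerSeries (Fin 3) ℝ} (hF : IsDefining k F)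
    (h : MvPowerSeries (Fin 2) ℂ) (d : Fin 3 →₀ ℕ) (hd : wt3 k d ≤ k) :
    MvPowerSeries.coeff (R := ℂ) d (mSubst (tubeFam F) h) =
      cf2 h (wt3 k d) 0 * MvPowerSeries.coeff (R := ℂ) d (zs ^ wt3 k d)
        + cf2 h 0 1 * MvPowerSeries.coeff (R := ℂ) d (ws F) := by
  have hrw : MvPowerSeries.coeff (R := ℂ) d (mSubst (tubeFam F) h)
      = ∑ᶠ e : Fin 2 →₀ ℕ, MvPowerSeries.coeff (R := ℂ) e h *
          MvPowerSeries.coeff (R := ℂ) d (zs ^ (e 0) * (ws F) ^ (e 1)) := by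
    apply finsum_congr
    intro e
    rw [prod_tubeFam]
  rw [hrw]
  rw [finsum_eq_finset_sum_of_support_subset _
    (s := {single 0 (wt3 k d), single 1 1}) ?hsupp]
  case hsupp =>
    intro e he
    simp only [Function.mem_support] at he
    simp only [Finset.coe_insert, Finset.coe_singleton, Set.mem_insert_iff, Set.mem_singleton_iff]
    have hc : MvPowerSeries.coeff (R := ℂ) d (zs ^ (e 0) * (ws F) ^ (e 1)) ≠ 0 := by
      intro h0; rw [h0, mul_zero] at he; exact he rfl
    rcases Nat.eq_zero_or_pos (e 1) with h1 | h1
    · left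
      have : e 0 = wt3 k d := by
        by_contra hne
        apply hc
        rw [h1, pow_zero, mul_one, coeff_zs_pow]
        rw [if_neg]
        rintro ⟨ha, hb⟩
        apply hne
        simp [wt3, hb, ha]
      rw [fin2_decomp e, h1, this]
      simp
    · -- e 1 ≥ 1 : use lower bounds
      have hlb : Lb k (e 0 * 1 + e 1 * k) (zs ^ (e 0) * (ws F) ^ (e 1)) := by
        apply Lb.mul
        · apply Lb.pow
          intro d' hd'
          rw [← pow_one zs, coeff_zs_pow, if_neg]
          rintro ⟨ha, hb⟩
          simp [wt3, ha, hb] at hd'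
        · exact (lb_ws hk hF).pow (e 1)
      have hle : e 0 * 1 + e 1 * k ≤ wt3 k d := by
        by_contra hgt
        exact hc (hlb d (by omega))
      have he1 : e 1 = 1 := by
        by_contra hne
        have h2 : 2 ≤ e 1 := by omega
        have h3 : 2 * k ≤ e 1 * k := Nat.mul_le_mul_right k h2
        omega
      rw [he1] at hle
      have he0 : e 0 = 0 := by omega
      right
      rw [fin2_decomp e, he0, he1]
      simp
  have hne : (single 0 (wt3 k d) : Fin 2 →₀ ℕ) ≠ single 1 1 := by
    intro h0
    have := congrFun (congrArg (fun f : Fin 2 →₀ ℕ => (f : Fin 2 → ℕ)) h0) 1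
    simp [Finsupp.single_apply] at this
  rw [Finset.sum_insert (by simpa using hne), Finset.sum_singleton]
  congr 1
  · rw [cf2_eq_coeff]
    simp [Finsupp.single_apply]
  · rw [cf2_eq_coeff]
    simp [Finsupp.single_apply]

lemma coeff_reP {σ : Type*} (f : MvPowerSeries σ ℂ) (d : σ →₀ ℕ) :
    MvPowerSeries.coeff (R := ℝ) d (reP f) = (MvPowerSeries.coeff (R := ℂ) d f).re := rfl

lemma coeff_imP {σ : Type*} (f : MvPowerSeries σ ℂ) (d : σ →₀ ℕ) :
    MvPowerSeries.coeff (R := ℝ) d (imP f) = (MvPowerSeries.coeff (R := ℂ) d f).im := rfl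

lemma Lb.reP {k n : ℕ} {f : MvPowerSeries (Fin 3) ℂ} (hf : Lb k n f) : Lb k n (_root_.reP f) := by
  intro d hd; rw [coeff_reP, hf d hd]; rfl

lemma Lb.imP {k n : ℕ} {f : MvPowerSeries (Fin 3) ℂ} (hf : Lb k n f) : Lb k n (_root_.imP f) := by
  intro d hd; rw [coeff_imP, hf d hd]; rfl

/-- lower bound for substituted series, from vanishing of low-weight coefficients -/
lemma lb_subst2 {k : ℕ} (hk : 0 < k) {F : MvPowerSeries (Fin 3) ℝ} (hF : IsDefining k F)
    {h : MvPowerSeries (Fin 2) ℂ} {n : ℕ} (hn : n ≤ k)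
    (hlow : ∀ j, j < n → cf2 h j 0 = 0) :
    Lb k n (mSubst (tubeFam F) h) := by
  intro d hd
  rw [coeff_subst2 hk hF h d (by omega)]
  rw [hlow _ hd, zero_mul, zero_add, lb_ws hk hF d (by omega), mul_zero]

/-- The key evaluation of the left-hand side of the mapping equation. -/
lemma coeff_subst3 {k : ℕ} {Fs : MvPowerSeries (Fin 3) ℝ} (hFs : IsDefining k Fs)
    {P Q R : MvPowerSeries (Fin 3) ℝ} (hP : Lb k 1 P) (hQ : Lb k 1 Q)
    (d : Fin 3 →₀ ℕ) (hR : Lb k (wt3 k d) R)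
    (h1 : 1 ≤ wt3 k d) (hd : wt3 k d ≤ k) :
    MvPowerSeries.coeff (R := ℝ) d (mSubst ![P, Q, R] Fs) = MvPowerSeries.coeff (R := ℝ) d (P ^ k) := by
  have hrw : MvPowerSeries.coeff (R := ℝ) d (mSubst ![P, Q, R] Fs)
      = ∑ᶠ e : Fin 3 →₀ ℕ, MvPowerSeries.coeff (R := ℝ) e Fs *
          MvPowerSeries.coeff (R := ℝ) d (P ^ (e 0) * Q ^ (e 1) * R ^ (e 2)) := by
    apply finsum_congr
    intro e
    congr 1
    rw [Finsupp.prod_fintype _ _ (fun i => pow_zero _), Fin.prod_univ_three]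
    rfl
  rw [hrw]
  rw [finsum_eq_finset_sum_of_support_subset _ (s := {single 0 k}) ?hsupp]
  case hsupp =>
    intro e he
    simp only [Function.mem_support] at he
    simp only [Finset.coe_singleton, Set.mem_singleton_iff]
    have hcFs : MvPowerSeries.coeff (R := ℝ) e Fs ≠ 0 := by
      intro h0; rw [h0, zero_mul] at he; exact he rfl
    have hc : MvPowerSeries.coeff (R := ℝ) d (P ^ (e 0) * Q ^ (e 1) * R ^ (e 2)) ≠ 0 := by
      intro h0; rw [h0, mul_zero] at he; exact he rfl
    have hlb : Lb k (e 0 * 1 + e 1 * 1 + e 2 * wt3 k d) (P ^ (e 0) * Q ^ (e 1) * R ^ (e 2)) :=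
      ((hP.pow (e 0)).mul (hQ.pow (e 1))).mul (hR.pow (e 2))
    have hle : e 0 * 1 + e 1 * 1 + e 2 * wt3 k d ≤ wt3 k d := by
      by_contra hgt
      exact hc (hlb d (by omega))
    have hFse := hFs (e 0) (e 1) (e 2)
    rcases Nat.eq_zero_or_pos (e 2) with h2 | h2
    · have hwte : e 0 + e 1 + k * e 2 ≤ k := by
        rw [h2]; omega
      rw [← coeff_eq_cf3] at hFse
      · rw [hFse hwte] at hcFs
        rw [ne_eq, ite_eq_right_iff, not_forall] at hcFs
        obtain ⟨⟨ha, hb, -⟩, -⟩ := hcFs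
        rw [fin3_decomp e, ha, hb, h2]
        simp
    · exfalso
      have h21 : e 2 = 1 := by
        by_contra hne
        have : 2 * wt3 k d ≤ e 2 * wt3 k d := Nat.mul_le_mul_right _ (by omega)
        omega
      have h00 : e 0 = 0 ∧ e 1 = 0 := by
        rw [h21] at hle; constructor <;> omega
      rw [← coeff_eq_cf3] at hFse
      rw [hFse (by rw [h21, h00.1, h00.2]; omega)] at hcFs
      rw [h00.1] at hcFs
      simp at hcFs
      omega
  rw [Finset.sum_singleton]
  have h0 : (single 0 k : Fin 3 →₀ ℕ) 0 = k := by simp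
  have h1' : (single 0 k : Fin 3 →₀ ℕ) 1 = 0 := by simp [Finsupp.single_apply]
  have h2' : (single 0 k : Fin 3 →₀ ℕ) 2 = 0 := by simp [Finsupp.single_apply]
  rw [h0, h1', h2', pow_zero, pow_zero, mul_one, mul_one]
  have : MvPowerSeries.coeff (R := ℝ) (single 0 k) Fs = 1 := by
    rw [coeff_eq_cf3, h0, h1', h2']
    rw [hFs k 0 0 (by omega)]
    simp
  rw [this, one_mul]

lemma wt3_le_one {k : ℕ} (hk : 2 ≤ k) (d : Fin 3 →₀ ℕ) (h : wt3 k d ≤ 1) :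
    d = 0 ∨ d = single 0 1 ∨ d = single 1 1 := by
  have hd2 : d 2 = 0 := by
    by_contra hne
    have : k ≤ k * d 2 := Nat.le_mul_of_pos_right k (by omega)
    simp only [wt3] at h
    omega
  simp only [wt3, hd2, Nat.mul_zero, Nat.add_zero] at h
  have hd := fin3_decomp d
  rw [hd2] at hd
  simp only [Finsupp.single_zero, add_zero] at hd
  rcases Nat.le_one_iff_eq_zero_or_eq_one.mp (le_trans (Nat.le_add_right _ _) h : d 0 ≤ 1) with
    h0 | h0
  · rcases Nat.le_one_iff_eq_zero_or_eq_one.mp (le_trans (Nat.le_add_left _ _) h : d 1 ≤ 1) with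
      h1 | h1
    · left; rw [hd, h0, h1]; simp
    · right; right; rw [hd, h0, h1]; simp
  · have h1 : d 1 = 0 := by omega
    right; left; rw [hd, h0, h1]; simp

/-- replacing `P` by its weighted-linear part in `P^k` -/
lemma coeff_P_pow {k : ℕ} (hk : 1 ≤ k) (P L : MvPowerSeries (Fin 3) ℝ)
    (hL : Lb k 1 L) (hD : Lb k 2 (P - L)) (d : Fin 3 →₀ ℕ) (hd : wt3 k d ≤ k) :
    MvPowerSeries.coeff (R := ℝ) d (P ^ k) = MvPowerSeries.coeff (R := ℝ) d (L ^ k) := by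
  have hPL : P = L + (P - L) := by ring
  rw [hPL, add_pow, map_sum, Finset.sum_range_succ]
  have hz : ∀ m ∈ Finset.range k,
      MvPowerSeries.coeff (R := ℝ) d (L ^ m * (P - L) ^ (k - m) * ((k.choose m : ℕ) : MvPowerSeries (Fin 3) ℝ)) = 0 := by
    intro m hm
    simp only [Finset.mem_range] at hm
    have hlb : Lb k (m * 1 + (k - m) * 2 + 0) (L ^ m * (P - L) ^ (k - m) *
        ((k.choose m : ℕ) : MvPowerSeries (Fin 3) ℝ)) :=
      ((hL.pow m).mul (hD.pow (k - m))).mul (Lb_zero k _)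
    exact hlb d (by omega)
  rw [Finset.sum_eq_zero hz, zero_add]
  rw [Nat.sub_self, pow_zero, mul_one, Nat.choose_self, Nat.cast_one, mul_one]

lemma cf2_C_mul (c : ℂ) (h : MvPowerSeries (Fin 2) ℂ) (j m : ℕ) :
    cf2 (MvPowerSeries.C (σ := Fin 2) (R := ℂ) c * h) j m = c * cf2 h j m := by
  rw [cf2, cf2, coeff_C_mul]

lemma wt3_x_pow (k n : ℕ) : wt3 k (single 0 n) = n := by
  simp [wt3, Finsupp.single_apply]

lemma wt3_xy (k a b : ℕ) : wt3 k (single 0 a + single 1 b) = a + b := by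
  simp [wt3, Finsupp.single_apply]

lemma wt3_u (k : ℕ) : wt3 k (single 2 1) = k := by
  simp [wt3, Finsupp.single_apply]


/-- factorization of form-preserving maps: any formal transformation mapping
one defining series with tube model to another factors uniquely as a dilation
`(δz, δ^k w)` followed by a normalizing transformation. -/
theorem formalTransf_factorization (k : ℕ) (hk : 2 < k)
    (F Fs : MvPowerSeries (Fin 3) ℝ) (hF : IsDefining k F) (hFs : IsDefining k Fs)
    (φ ψ : MvPowerSeries (Fin 2) ℂ) (hΦ : IsFormalTransf φ ψ)
    (hmap : MapsSeries F Fs φ ψ) :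
    ∃! p : ℝ × (MvPowerSeries (Fin 2) ℂ × MvPowerSeries (Fin 2) ℂ),
      p.1 ≠ 0 ∧ IsNormalizing k p.2.1 p.2.2 ∧
      φ = MvPowerSeries.C (σ := Fin 2) (R := ℂ) (p.1 : ℂ) * p.2.1 ∧
      ψ = MvPowerSeries.C (σ := Fin 2) (R := ℂ) ((p.1 : ℂ) ^ k) * p.2.2 := by
  obtain ⟨hφ0, hψ0, hJ⟩ := hΦ
  have hk0 : 0 < k := by omega
  set Sφ := mSubst (tubeFam F) φ with hSφdef
  set Sψ := mSubst (tubeFam F) ψ with hSψdef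
  have hmap' : mSubst ![reP Sφ, imP Sφ, reP Sψ] Fs = imP Sψ := hmap
  have hSφlb : Lb k 1 Sφ :=
    lb_subst2 hk0 hF (by omega) (fun j hj => by
      have : j = 0 := by omega
      rw [this]; exact hφ0)
  have hP : Lb k 1 (reP Sφ) := hSφlb.reP
  have hQ : Lb k 1 (imP Sφ) := hSφlb.imP
  -- the key coefficient extractor
  have key : ∀ d : Fin 3 →₀ ℕ, 1 ≤ wt3 k d → wt3 k d ≤ k → Lb k (wt3 k d) (reP Sψ) →
      MvPowerSeries.coeff (R := ℝ) d ((reP Sφ) ^ k) = (MvPowerSeries.coeff (R := ℂ) d Sψ).im := by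
    intro d h1 h2 hR
    have h := congrArg (MvPowerSeries.coeff (R := ℝ) d) hmap'
    rw [coeff_subst3 hFs hP hQ d hR h1 h2] at h
    rw [h, coeff_imP]
  -- Step A : cf2 ψ j 0 = 0 for 1 ≤ j ≤ k-1
  have hstep : ∀ j, 1 ≤ j → j ≤ k - 1 → cf2 ψ j 0 = 0 := by
    intro j
    induction j using Nat.strong_induction_on with
    | _ j ih =>
      intro hj1 hjk
      have hlow : ∀ j', j' < j → cf2 ψ j' 0 = 0 := by
        intro j' hj'
        rcases Nat.eq_zero_or_pos j' with rfl | hpos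
        · exact hψ0
        · exact ih j' hj' hpos (by omega)
      have hR : Lb k j (reP Sψ) := (lb_subst2 hk0 hF (by omega) hlow).reP
      have hPk0 : ∀ d, wt3 k d < k → MvPowerSeries.coeff (R := ℝ) d ((reP Sφ) ^ k) = 0 := by
        intro d hd
        exact (hP.pow k) d (by omega)
      -- first monomial : x^j
      have hwa : wt3 k (single 0 j) = j := wt3_x_pow k j
      have ea := key (single 0 j) (by omega) (by omega) (by rw [hwa]; exact hR)
      rw [hPk0 _ (by omega)] at ea
      have hCa := coeff_subst2 hk0 hF ψ (single 0 j) (by rw [hwa]; omega)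
      rw [hwa] at hCa
      rw [lb_ws hk0 hF _ (by rw [hwa]; omega), mul_zero, add_zero, coeff_zs_pow,
        if_pos (by constructor <;> simp [Finsupp.single_apply])] at hCa
      rw [hCa] at ea
      simp only [Finsupp.single_apply] at ea
      norm_num at ea
      -- ea : 0 = (cf2 ψ j 0).im   (hopefully)
      -- second monomial : x^(j-1) y
      have hwb : wt3 k (single 0 (j-1) + single 1 1) = j := by rw [wt3_xy]; omega
      have eb := key (single 0 (j-1) + single 1 1) (by omega) (by omega) (by rw [hwb]; exact hR)
      rw [hPk0 _ (by omega)] at eb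
      have hCb := coeff_subst2 hk0 hF ψ (single 0 (j-1) + single 1 1) (by rw [hwb]; omega)
      rw [hwb] at hCb
      rw [lb_ws hk0 hF _ (by rw [hwb]; omega), mul_zero, add_zero, coeff_zs_pow,
        if_pos (by constructor <;> simp [Finsupp.single_apply] <;> omega)] at hCb
      rw [hCb] at eb
      simp only [Finsupp.add_apply, Finsupp.single_apply] at eb
      norm_num at eb
      have hre : (cf2 ψ j 0).re = 0 := eb.resolve_right (by omega)
      exact Complex.ext (by simpa using hre) (by simpa using ea.symm)
  have hψ10 : cf2 ψ 1 0 = 0 := hstep 1 le_rfl (by omega)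
  rw [hψ10, mul_zero, sub_zero] at hJ
  have ha : cf2 φ 1 0 ≠ 0 := fun h => hJ (by rw [h, zero_mul])
  have heψ : cf2 ψ 0 1 ≠ 0 := fun h => hJ (by rw [h, mul_zero])
  have hlowk : ∀ j', j' < k → cf2 ψ j' 0 = 0 := by
    intro j' hj'
    rcases Nat.eq_zero_or_pos j' with rfl | hpos
    · exact hψ0
    · exact hstep j' hpos (by omega)
  have hRk : Lb k k (reP Sψ) := (lb_subst2 hk0 hF le_rfl hlowk).reP
  set a : ℂ := cf2 φ 1 0 with hadef
  set α : ℝ := a.re with hαdef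
  set β : ℝ := a.im with hβdef
  set L : MvPowerSeries (Fin 3) ℝ :=
    MvPowerSeries.C (σ := Fin 3) (R := ℝ) α * X 0 + MvPowerSeries.C (σ := Fin 3) (R := ℝ) (-β) * X 1 with hLdef
  have hLlb : Lb k 1 L := by
    intro d hd
    rw [hLdef, ← pow_one (MvPowerSeries.C (σ := Fin 3) (R := ℝ) α * X 0 + MvPowerSeries.C (σ := Fin 3) (R := ℝ) (-β) * X 1),
      coeff_linpow, if_neg]
    rintro ⟨h1, -⟩
    simp [wt3, h1] at hd
  -- coefficients of Sφ at x and y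
  have hcx : MvPowerSeries.coeff (R := ℂ) (single 0 1) Sφ = a := by
    have hC := coeff_subst2 hk0 hF φ (single 0 1) (by rw [wt3_x_pow]; omega)
    rw [wt3_x_pow] at hC
    rw [lb_ws hk0 hF _ (by rw [wt3_x_pow]; omega), mul_zero, add_zero, coeff_zs_pow,
      if_pos (by constructor <;> simp [Finsupp.single_apply])] at hC
    rw [hC]
    simp [Finsupp.single_apply, hadef]
  have hcy : MvPowerSeries.coeff (R := ℂ) (single 1 1) Sφ = a * Complex.I := by
    have hw : wt3 k (single 1 1) = 1 := by simp [wt3, Finsupp.single_apply]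
    have hC := coeff_subst2 hk0 hF φ (single 1 1) (by rw [hw]; omega)
    rw [hw] at hC
    rw [lb_ws hk0 hF _ (by rw [hw]; omega), mul_zero, add_zero, coeff_zs_pow,
      if_pos (by constructor <;> simp [Finsupp.single_apply])] at hC
    rw [hC]
    simp [Finsupp.single_apply, hadef]
  have hD : Lb k 2 (reP Sφ - L) := by
    intro d hd
    rw [map_sub, coeff_reP]
    rcases wt3_le_one (k := k) (by omega) d (by omega) with rfl | rfl | rfl
    · rw [hSφlb 0 (by simp [wt3]), hLlb 0 (by simp [wt3])]
      simp
    · rw [hcx, hLdef, ← pow_one (MvPowerSeries.C (σ := Fin 3) (R := ℝ) α * X 0 + MvPowerSeries.C (σ := Fin 3) (R := ℝ) (-β) * X 1),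
        coeff_linpow, if_pos (by constructor <;> simp [Finsupp.single_apply])]
      simp [Finsupp.single_apply, hαdef]
    · rw [hcy, hLdef, ← pow_one (MvPowerSeries.C (σ := Fin 3) (R := ℝ) α * X 0 + MvPowerSeries.C (σ := Fin 3) (R := ℝ) (-β) * X 1),
        coeff_linpow, if_pos (by constructor <;> simp [Finsupp.single_apply])]
      simp [Finsupp.single_apply, Complex.mul_im, hβdef]
  have hPk : ∀ d, wt3 k d ≤ k →
      MvPowerSeries.coeff (R := ℝ) d ((reP Sφ) ^ k) = MvPowerSeries.coeff (R := ℝ) d (L ^ k) :=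
    coeff_P_pow (by omega) (reP Sφ) L hLlb hD
  -- the five weight-k equations
  have e0 : α ^ k = (cf2 ψ k 0).im + (cf2 ψ 0 1).re := by
    have hw : wt3 k (single 0 k : Fin 3 →₀ ℕ) = k := wt3_x_pow k k
    have e := key _ (by rw [hw]; omega) (by rw [hw]) (by rw [hw]; exact hRk)
    rw [hPk _ (by rw [hw]), hLdef, coeff_linpow,
      if_pos (by constructor <;> simp [Finsupp.single_apply])] at e
    have hC := coeff_subst2 hk0 hF ψ (single 0 k) (by rw [hw])
    rw [hw, coeff_zs_pow, if_pos (by constructor <;> simp [Finsupp.single_apply]),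
      coeff_ws hk0 hF _ (by rw [hw]),
      if_neg (by simp [Finsupp.single_eq_single_iff]), if_pos rfl] at hC
    rw [hC] at e
    simp [Finsupp.single_apply, Complex.add_im, Complex.mul_im] at e
    exact e
  have e1 : α ^ (k-1) * β = -(cf2 ψ k 0).re := by
    have hw : wt3 k (single 0 (k-1) + single 1 1) = k := by rw [wt3_xy]; omega
    have e := key _ (by rw [hw]; omega) (by rw [hw]) (by rw [hw]; exact hRk)
    rw [hPk _ (by rw [hw]), hLdef, coeff_linpow,
      if_pos (by simp [Finsupp.single_apply]; omega)] at e
    have hC := coeff_subst2 hk0 hF ψ _ (by rw [hw])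
    rw [hw, coeff_zs_pow, if_pos (by simp [Finsupp.single_apply]; omega),
      coeff_ws hk0 hF _ (by rw [hw]),
      if_neg (by intro hcon; have := DFunLike.congr_fun hcon 2; simp [Finsupp.single_apply] at this),
      if_neg (by intro hcon; have := DFunLike.congr_fun hcon 1; simp [Finsupp.single_apply] at this),
      mul_zero, add_zero] at hC
    rw [hC] at e
    simp [Finsupp.single_apply, Complex.mul_im] at e
    have hkR : (k:ℝ) ≠ 0 := Nat.cast_ne_zero.mpr (by omega)
    refine mul_left_cancel₀ hkR ?_
    linear_combination -e
  have e2 : α ^ (k-2) * β ^ 2 = -(cf2 ψ k 0).im := by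
    have hw : wt3 k (single 0 (k-2) + single 1 2) = k := by rw [wt3_xy]; omega
    have e := key _ (by rw [hw]; omega) (by rw [hw]) (by rw [hw]; exact hRk)
    rw [hPk _ (by rw [hw]), hLdef, coeff_linpow,
      if_pos (by simp [Finsupp.single_apply]; omega)] at e
    have hC := coeff_subst2 hk0 hF ψ _ (by rw [hw])
    rw [hw, coeff_zs_pow, if_pos (by simp [Finsupp.single_apply]; omega),
      coeff_ws hk0 hF _ (by rw [hw]),
      if_neg (by intro hcon; have := DFunLike.congr_fun hcon 2; simp [Finsupp.single_apply] at this),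
      if_neg (by intro hcon; have := DFunLike.congr_fun hcon 1; simp [Finsupp.single_apply] at this),
      mul_zero, add_zero] at hC
    rw [hC] at e
    simp [Finsupp.single_apply, Complex.mul_im] at e
    have hkR : ((k.choose 2 : ℕ):ℝ) ≠ 0 := Nat.cast_ne_zero.mpr (Nat.choose_pos (by omega)).ne'
    refine mul_left_cancel₀ hkR ?_
    linear_combination e
  have e3 : α ^ (k-3) * β ^ 3 = (cf2 ψ k 0).re := by
    have hw : wt3 k (single 0 (k-3) + single 1 3) = k := by rw [wt3_xy]; omega
    have e := key _ (by rw [hw]; omega) (by rw [hw]) (by rw [hw]; exact hRk)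
    rw [hPk _ (by rw [hw]), hLdef, coeff_linpow,
      if_pos (by simp [Finsupp.single_apply]; omega)] at e
    have hC := coeff_subst2 hk0 hF ψ _ (by rw [hw])
    rw [hw, coeff_zs_pow, if_pos (by simp [Finsupp.single_apply]; omega),
      coeff_ws hk0 hF _ (by rw [hw]),
      if_neg (by intro hcon; have := DFunLike.congr_fun hcon 2; simp [Finsupp.single_apply] at this),
      if_neg (by intro hcon; have := DFunLike.congr_fun hcon 1; simp [Finsupp.single_apply] at this),
      mul_zero, add_zero] at hC
    rw [hC] at e
    have hI3 : Complex.I ^ 3 = -Complex.I := by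
      rw [pow_succ, Complex.I_sq, neg_one_mul]
    simp [Finsupp.single_apply, Complex.mul_im, hI3] at e
    have hkR : ((k.choose 3 : ℕ):ℝ) ≠ 0 := Nat.cast_ne_zero.mpr (Nat.choose_pos (by omega)).ne'
    refine mul_left_cancel₀ hkR ?_
    linear_combination -e
  have eu : (cf2 ψ 0 1).im = 0 := by
    have hw : wt3 k (single 2 1 : Fin 3 →₀ ℕ) = k := wt3_u k
    have e := key _ (by rw [hw]; omega) (by rw [hw]) (by rw [hw]; exact hRk)
    rw [hPk _ (by rw [hw]), hLdef, coeff_linpow,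
      if_neg (by simp [Finsupp.single_apply])] at e
    have hC := coeff_subst2 hk0 hF ψ _ (by rw [hw])
    rw [hw, coeff_zs_pow,
      if_neg (by simp [Finsupp.single_apply]),
      coeff_ws hk0 hF _ (by rw [hw]), if_pos rfl, mul_zero, zero_add, mul_one] at hC
    rw [hC] at e
    exact e.symm
  -- derive that a is real
  have hβ : β = 0 := by
    have hsplit : α ^ (k-1) = α ^ (k-3) * α ^ 2 := by
      rw [← pow_add]; congr 1; omega
    have hz : α ^ (k-3) * (β * (α ^ 2 + β ^ 2)) = 0 := by
      linear_combination e3 + e1 - β * hsplit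
    rcases mul_eq_zero.mp hz with hz1 | hz2
    · exfalso
      have hα : α = 0 := by
        rcases Nat.eq_zero_or_pos (k-3) with h3 | h3
        · rw [h3, pow_zero] at hz1; exact absurd hz1 one_ne_zero
        · exact (pow_eq_zero_iff (by omega)).mp hz1
      have ht : (cf2 ψ k 0).im = 0 := by
        rw [hα, zero_pow (by omega : k - 2 ≠ 0)] at e2
        linarith [e2]
      have her : (cf2 ψ 0 1).re = 0 := by
        rw [hα, zero_pow (by omega : k ≠ 0)] at e0
        linarith [e0]
      exact heψ (Complex.ext (by simpa using her) (by simpa using eu))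
    · rcases mul_eq_zero.mp hz2 with hβ | hs
      · exact hβ
      · exfalso
        have hα : α = 0 := by nlinarith [sq_nonneg α, sq_nonneg β]
        have hβ' : β = 0 := by nlinarith [sq_nonneg α, sq_nonneg β]
        exact ha (Complex.ext (by simpa using hα) (by simpa using hβ'))
  have hs0 : (cf2 ψ k 0).re = 0 := by
    rw [hβ] at e1; simp at e1; linarith [e1]
  have ht0 : (cf2 ψ k 0).im = 0 := by
    rw [hβ] at e2; simp at e2; linarith [e2]
  have hc0 : cf2 ψ k 0 = 0 := Complex.ext (by simpa using hs0) (by simpa using ht0)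
  have her : (cf2 ψ 0 1).re = α ^ k := by linarith [e0, ht0]
  have hαne : α ≠ 0 := fun h => ha (Complex.ext (by simpa using h) (by simpa using hβ))
  have haα : a = (α : ℂ) := Complex.ext (by simp [hαdef]) (by simp [← hβdef, hβ])
  have heα : cf2 ψ 0 1 = (α : ℂ) ^ k := by
    refine Complex.ext ?_ ?_
    · rw [← Complex.ofReal_pow, Complex.ofReal_re]; exact her
    · rw [← Complex.ofReal_pow, Complex.ofReal_im]; exact eu
  have hαC : ((α : ℝ) : ℂ) ≠ 0 := Complex.ofReal_ne_zero.mpr hαne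
  have hαkC : ((α : ℝ) : ℂ) ^ k ≠ 0 := pow_ne_zero _ hαC
  -- construction and uniqueness
  refine ⟨⟨α, MvPowerSeries.C (σ := Fin 2) (R := ℂ) ((α : ℂ))⁻¹ * φ,
      MvPowerSeries.C (σ := Fin 2) (R := ℂ) (((α : ℂ)) ^ k)⁻¹ * ψ⟩, ⟨hαne, ⟨?_, ?_⟩, ?_, ?_⟩, ?_⟩
  · -- normalizing condition for φ'
    intro j m hjm
    have hm : m = 0 := by
      by_contra hm0
      have : k ≤ k * m := Nat.le_mul_of_pos_right k (by omega)
      omega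
    subst hm
    rw [cf2_C_mul]
    have hj : j ≤ 1 := by omega
    interval_cases j
    · rw [hφ0, mul_zero]; simp
    · rw [← hadef, haα, inv_mul_cancel₀ hαC]; simp
  · -- normalizing condition for ψ'
    intro j m hjm
    rcases m with _ | m
    · rw [cf2_C_mul]
      have hj : j ≤ k := by omega
      have hz : cf2 ψ j 0 = 0 := by
        rcases Nat.lt_or_ge j k with h | h
        · exact hlowk j h
        · rw [show j = k by omega]; exact hc0
      rw [hz, mul_zero]; simp
    · rcases m with _ | m
      · have hj : j = 0 := by
          have : k * 1 = k := by omega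
          omega
        subst hj
        rw [cf2_C_mul, heα, inv_mul_cancel₀ hαkC]
        simp
      · exfalso
        have : k * 2 ≤ k * (m + 1 + 1) := Nat.mul_le_mul_left k (by omega)
        omega
  · rw [← mul_assoc, ← map_mul, mul_inv_cancel₀ hαC, map_one, one_mul]
  · rw [← mul_assoc, ← map_mul, mul_inv_cancel₀ hαkC, map_one, one_mul]
  · rintro ⟨δ, χ, ω⟩ ⟨hδ0, ⟨hN1, hN2⟩, hφeq, hψeq⟩
    have hχ1 : cf2 χ 1 0 = 1 := by
      have := hN1 1 0 (by simp)
      simpa using this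
    have hδa : (δ : ℂ) = a := by
      have hcf := congrArg (fun h => cf2 h 1 0) hφeq
      simp only [cf2_C_mul, hχ1, mul_one] at hcf
      rw [hadef, hcf]
    have hδα : δ = α := by
      have : (δ : ℂ) = ((α : ℝ) : ℂ) := by rw [hδa, haα]
      exact_mod_cast this
    subst hδα
    have hχ : χ = MvPowerSeries.C (σ := Fin 2) (R := ℂ) ((α : ℂ))⁻¹ * φ := by
      rw [hφeq, ← mul_assoc, ← map_mul, inv_mul_cancel₀ hαC, map_one, one_mul]
    have hω : ω = MvPowerSeries.C (σ := Fin 2) (R := ℂ) (((α : ℂ)) ^ k)⁻¹ * ψ := by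
      rw [hψeq, ← mul_assoc, ← map_mul, inv_mul_cancel₀ hαkC, map_one, one_mul]
    simp only [Prod.mk.injEq]
    exact ⟨trivial, hχ, hω⟩
end
end

section
/- Let k > 2 be an integer and let F be real-analytic in a neighborhood of 0 ∈ ℝ with F(x) = x^k + o(x^k). Let a denote the (2k−1)-st Taylor coefficient of F at 0 and set h = −a/k. Then there exists a function F*, real-analytic in a neighborhood of 0, with F*(x) = x^k + o(x^k) and with vanishing (2k−1)-st Taylor coefficient at 0, such that F*(x − h·F(x)) = F(x) for all x in some neighborhood of 0; consequently the biholomorphism Φ(z,w) = (z + ihw, w) maps T_F into T_{F*} near the origin: there is an open neighborhood U of 0 in ℂ² with Φ(T_F ∩ U) ⊆ T_{F*}. -/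
noncomputable section

open Complex

/-- The tube hypersurface over the graph of `h` (on all of `ℝ`). -/
def TubeAll (h : ℝ → ℝ) : Set (ℂ × ℂ) :=
  {p : ℂ × ℂ | p.2.im = h p.1.re}

open Filter Asymptotics Finset Topology

lemma pow_bigO_pow {m b : ℕ} (hb : b ≤ m) :
    (fun x : ℝ => x ^ m) =O[𝓝 (0:ℝ)] fun x => x ^ b := by
  have he : (fun x : ℝ => x ^ m) = fun x => x ^ (m - b) * x ^ b := by
    funext x; rw [← pow_add]; congr 1; omega
  rw [he]
  have h1 : (fun x : ℝ => x ^ (m - b)) =O[𝓝 (0:ℝ)] fun _ => (1:ℝ) :=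
    ((continuous_pow (m - b)).tendsto (0:ℝ)).isBigO_one ℝ
  simpa using h1.mul (isBigO_refl (fun x : ℝ => x ^ b) _)

lemma pow_littleO_pow {m b : ℕ} (hb : b < m) :
    (fun x : ℝ => x ^ m) =o[𝓝 (0:ℝ)] fun x => x ^ b := by
  have he : (fun x : ℝ => x ^ m) = fun x => x ^ (m - b) * x ^ b := by
    funext x; rw [← pow_add]; congr 1; omega
  rw [he]
  have h1 : (fun x : ℝ => x ^ (m - b)) =o[𝓝 (0:ℝ)] fun _ => (1:ℝ) := by
    rw [isLittleO_one_iff]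
    have h0 : (m - b) ≠ 0 := by omega
    have := (continuous_pow (m - b)).tendsto (0:ℝ)
    simpa [zero_pow h0] using this
  simpa using h1.mul_isBigO (isBigO_refl (fun x : ℝ => x ^ b) _)

lemma polyvanish : ∀ (n : ℕ) (c : ℕ → ℝ),
    (fun x => ∑ i ∈ range (n+1), c i * x ^ i) =o[𝓝[≠] (0:ℝ)] (fun x => x ^ n) →
    ∀ i ≤ n, c i = 0 := by
  intro n
  induction n with
  | zero =>
    intro c hc i hi
    interval_cases i
    have h1 : Tendsto (fun x : ℝ => ∑ i ∈ range 1, c i * x ^ i) (𝓝[≠] (0:ℝ)) (𝓝 0) := by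
      rw [← isLittleO_one_iff ℝ]
      simpa using hc
    have h2 : Tendsto (fun _ : ℝ => c 0) (𝓝[≠] (0:ℝ)) (𝓝 (c 0)) := tendsto_const_nhds
    have he : (fun x : ℝ => ∑ i ∈ range 1, c i * x ^ i) = fun _ => c 0 := by
      funext x; simp
    rw [he] at h1
    exact (tendsto_nhds_unique h2 h1).symm ▸ rfl
  | succ n ih =>
    intro c hc
    have hc0 : c 0 = 0 := by
      have h1 : Tendsto (fun x : ℝ => ∑ i ∈ range (n+2), c i * x ^ i) (𝓝[≠] (0:ℝ)) (𝓝 0) := by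
        rw [← isLittleO_one_iff ℝ]
        refine hc.trans_isBigO ?_
        exact (((continuous_pow (n+1)).tendsto (0:ℝ)).mono_left nhdsWithin_le_nhds).isBigO_one ℝ
      have h2 : Tendsto (fun x : ℝ => ∑ i ∈ range (n+2), c i * x ^ i) (𝓝[≠] (0:ℝ))
          (𝓝 (∑ i ∈ range (n+2), c i * (0:ℝ) ^ i)) := by
        exact ((continuous_finset_sum _ fun i _ =>
          (continuous_const.mul (continuous_pow i))).tendsto 0).mono_left nhdsWithin_le_nhds
      have := tendsto_nhds_unique h2 h1
      rw [Finset.sum_range_succ' (fun i => c i * (0:ℝ) ^ i) (n+1)] at this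
      simpa using this
    have hfac : ∀ x : ℝ, (∑ i ∈ range (n+2), c i * x ^ i) =
        x * ∑ i ∈ range (n+1), c (i+1) * x ^ i := by
      intro x
      rw [Finset.sum_range_succ' (fun i => c i * x ^ i) (n+1)]
      rw [Finset.mul_sum]
      simp [hc0]
      apply Finset.sum_congr rfl
      intro i _
      ring
    have hG : (fun x : ℝ => ∑ i ∈ range (n+1), c (i+1) * x ^ i) =o[𝓝[≠] (0:ℝ)]
        fun x => x ^ n := by
      rw [isLittleO_iff]
      intro ε hε
      filter_upwards [hc.def hε, self_mem_nhdsWithin] with x hx hx0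
      rw [hfac x] at hx
      simp only [Set.mem_compl_iff, Set.mem_singleton_iff] at hx0
      have hxpos : (0:ℝ) < ‖x‖ := by simpa [norm_pos_iff] using hx0
      rw [norm_mul, pow_succ, mul_comm (x^n) x, norm_mul] at hx
      rw [← mul_le_mul_iff_right₀ hxpos]
      calc ‖x‖ * ‖∑ i ∈ range (n+1), c (i+1) * x ^ i‖ ≤ ε * (‖x‖ * ‖x ^ n‖) := hx
        _ = ‖x‖ * (ε * ‖x ^ n‖) := by ring
    intro i hi
    rcases Nat.eq_zero_or_pos i with h0 | h0
    · subst h0; exact hc0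
    · obtain ⟨j, rfl⟩ := Nat.exists_eq_add_of_lt h0
      simp only [zero_add]
      exact ih _ hG j (by omega)

lemma taylor_littleO {f : ℝ → ℝ} {p : FormalMultilinearSeries ℝ ℝ ℝ}
    (h : HasFPowerSeriesAt f p 0) (n : ℕ) :
    (fun x => f x - ∑ i ∈ range (n+1), p.coeff i * x ^ i) =o[𝓝 (0:ℝ)] fun x => x ^ n := by
  have h1 := h.isBigO_sub_partialSum_pow (n+1)
  have h2 : ∀ y : ℝ, p.partialSum (n+1) y = ∑ i ∈ range (n+1), p.coeff i * y ^ i := by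
    intro y
    unfold FormalMultilinearSeries.partialSum
    refine Finset.sum_congr rfl fun i _ => ?_
    rw [p.apply_eq_pow_smul_coeff, smul_eq_mul]; ring
  have h3 : (fun y : ℝ => ‖y‖ ^ (n+1)) =O[𝓝 (0:ℝ)] fun y => y ^ (n+1) := by
    apply IsBigO.of_bound 1
    filter_upwards with y
    simp [abs_pow]
  have h4 : (fun y : ℝ => f (0 + y) - p.partialSum (n+1) y) =O[𝓝 (0:ℝ)] fun y => y ^ (n+1) :=
    h1.trans h3
  have h5 := h4.trans_isLittleO (pow_littleO_pow (Nat.lt_succ_self n))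
  refine h5.congr' ?_ (by rfl)
  filter_upwards with y
  rw [h2 y, zero_add]

lemma coeff_eq_iteratedDeriv {f : ℝ → ℝ} {p : FormalMultilinearSeries ℝ ℝ ℝ}
    (h : HasFPowerSeriesAt f p 0) (n : ℕ) :
    iteratedDeriv n f 0 = n.factorial • p.coeff n := by
  obtain ⟨r, hr⟩ := h
  rw [iteratedDeriv_eq_iteratedFDeriv, ← hr.factorial_smul 1 n]
  rfl

lemma coeff_match {f : ℝ → ℝ} {p : FormalMultilinearSeries ℝ ℝ ℝ}
    (h : HasFPowerSeriesAt f p 0) (n : ℕ) (g : ℕ → ℝ)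
    (ho : (fun x => f x - ∑ i ∈ range (n+1), g i * x ^ i) =o[𝓝 (0:ℝ)] fun x => x ^ n) :
    ∀ i ≤ n, p.coeff i = g i := by
  have h1 := taylor_littleO h n
  have h2 : (fun x : ℝ => ∑ i ∈ range (n+1), (p.coeff i - g i) * x ^ i) =o[𝓝 (0:ℝ)]
      fun x => x ^ n := by
    have hsub := ho.sub h1
    refine hsub.congr' ?_ (by rfl)
    filter_upwards with x
    rw [sub_sub_sub_cancel_left, ← Finset.sum_sub_distrib]
    exact Finset.sum_congr rfl fun i _ => by ring
  have h3 := polyvanish n _ (h2.mono nhdsWithin_le_nhds)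
  intro i hi
  have := h3 i hi
  linarith

lemma pow_taylor2 (i : ℕ) : ∃ s : ℝ × ℝ → ℝ, Continuous s ∧
    ∀ x d : ℝ, (x + d) ^ i = x ^ i + i * x ^ (i-1) * d + d ^ 2 * s (x, d) := by
  induction i with
  | zero => exact ⟨fun _ => 0, continuous_const, fun x d => by simp⟩
  | succ i ih =>
    obtain ⟨s, hs, hsi⟩ := ih
    rcases Nat.eq_zero_or_pos i with h0 | h0
    · subst h0
      exact ⟨fun _ => 0, continuous_const, fun x d => by simpa using by ring⟩
    · refine ⟨fun q => q.1 * s q + q.2 * s q + (i : ℝ) * q.1 ^ (i - 1), ?_, ?_⟩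
      · fun_prop
      · intro x d
        have hx : x ^ (i - 1) * x = x ^ i := by
          rw [← pow_succ]; congr 1; omega
        have hii : (i + 1 : ℕ) - 1 = i := by omega
        rw [pow_succ, hsi x d, hii]
        push_cast
        ring_nf
        rw [← hx]
        ring

lemma poly_taylor2 (n : ℕ) (c : ℕ → ℝ) : ∃ S : ℝ × ℝ → ℝ, Continuous S ∧
    ∀ x d : ℝ, ∑ i ∈ range (n+1), c i * (x + d) ^ i =
      (∑ i ∈ range (n+1), c i * x ^ i) +
      d * (∑ i ∈ range (n+1), (i : ℝ) * c i * x ^ (i-1)) + d ^ 2 * S (x, d) := by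
  refine ⟨fun q => ∑ i ∈ range (n+1), c i * (pow_taylor2 i).choose q,
    continuous_finset_sum _ fun i _ =>
      (continuous_const.mul (pow_taylor2 i).choose_spec.1), fun x d => ?_⟩
  have hterm : ∀ i ∈ range (n+1), c i * (x + d) ^ i =
      c i * x ^ i + d * ((i : ℝ) * c i * x ^ (i-1)) +
        d ^ 2 * (c i * (pow_taylor2 i).choose (x, d)) := by
    intro i _
    rw [(pow_taylor2 i).choose_spec.2 x d]
    ring
  rw [Finset.sum_congr rfl hterm]
  rw [Finset.sum_add_distrib, Finset.sum_add_distrib, ← Finset.mul_sum, ← Finset.mul_sum]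

lemma sum_monomial_bigO (s : Finset ℕ) (c : ℕ → ℝ) (e : ℕ → ℕ) (m : ℕ)
    (he : ∀ i ∈ s, m ≤ e i) :
    (fun x : ℝ => ∑ i ∈ s, c i * x ^ (e i)) =O[𝓝 (0:ℝ)] fun x => x ^ m := by
  refine IsBigO.fun_sum fun i hi => ?_
  exact (pow_bigO_pow (he i hi)).const_mul_left _

lemma analytic_local_inverse (vph : ℝ → ℝ) (hvphan : AnalyticAt ℝ vph 0) (hvph0 : vph 0 = 0)
    (hd : deriv vph 0 = 1) :
    ∃ vps : ℝ → ℝ, AnalyticAt ℝ vps 0 ∧ (∀ᶠ x in 𝓝 (0:ℝ), vps (vph x) = x) := by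
  have hsd : HasStrictDerivAt vph 1 0 := by
    have := (hvphan.contDiffAt (n := 1)).hasStrictDerivAt one_ne_zero
    rwa [hd] at this
  have hsf : HasStrictFDerivAt vph
      ((ContinuousLinearEquiv.refl ℝ ℝ : ℝ ≃L[ℝ] ℝ) : ℝ →L[ℝ] ℝ) 0 := by
    have h2 := hsd.hasStrictFDerivAt
    have he : ((ContinuousLinearEquiv.refl ℝ ℝ : ℝ ≃L[ℝ] ℝ) : ℝ →L[ℝ] ℝ) =
        ContinuousLinearMap.toSpanSingleton ℝ 1 := by
      ext x
      simp
    rw [he]; exact h2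
  set PH := hsf.toOpenPartialHomeomorph vph with hPH
  have hcoe : (PH : ℝ → ℝ) = vph := hsf.toOpenPartialHomeomorph_coe
  have hmem : (0:ℝ) ∈ PH.source := hsf.mem_toOpenPartialHomeomorph_source
  obtain ⟨pvph, hpvph⟩ := hvphan
  have hp1 : pvph 1 = (continuousMultilinearCurryFin1 ℝ ℝ ℝ).symm
      ((ContinuousLinearEquiv.refl ℝ ℝ : ℝ ≃L[ℝ] ℝ) : ℝ →L[ℝ] ℝ) := by
    refine ContinuousMultilinearMap.ext fun m => ?_
    have h1 : pvph 1 m = pvph 1 (fun _ => m 0) := by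
      congr 1; funext j; congr 1; exact Subsingleton.elim _ _
    rw [h1]
    have h2 : pvph 1 (fun _ => m 0) = (m 0) ^ 1 • pvph.coeff 1 := pvph.apply_eq_pow_smul_coeff
    have h3 : pvph.coeff 1 = 1 := by
      have h4 := hpvph.deriv
      rw [hd] at h4
      exact h4.symm
    rw [h2, h3]
    simp
  have hsymm := PH.hasFPowerSeriesAt_symm hmem (by rw [hcoe]; exact hpvph) hp1
  rw [hcoe, hvph0] at hsymm
  refine ⟨PH.symm, ⟨_, hsymm⟩, ?_⟩
  filter_upwards [PH.eventually_left_inverse hmem] with x hx2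
  rw [← hcoe]
  exact hx2

/-- Corollary 5.1, convergent t-normalization of a tube: for `F` real-analytic
near `0` with `F(x) = x^k + o(x^k)`, letting `a` be the `(2k-1)`-st Taylor coefficient of `F`
and `h = -a/k`, there is `F*` real-analytic near `0`, with `F*(x) = x^k + o(x^k)` and vanishing
`(2k-1)`-st Taylor coefficient, with `F*(x - h·F(x)) = F(x)` near `0`; consequently
`Φ(z,w) = (z + ihw, w)` maps `T_F` into `T_{F*}` near the origin. -/
theorem tube_convergent_tNormalForm (k : ℕ) (hk : 2 < k)
    (F : ℝ → ℝ) (hFan : AnalyticAt ℝ F 0)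
    (hFk : (fun x => F x - x ^ k) =o[nhds (0:ℝ)] fun x => x ^ k) :
    ∀ a h : ℝ,
      a = iteratedDeriv (2 * k - 1) F 0 / (Nat.factorial (2 * k - 1)) →
      h = -a / k →
      ∃ Fs : ℝ → ℝ, AnalyticAt ℝ Fs 0 ∧
        ((fun x => Fs x - x ^ k) =o[nhds (0:ℝ)] fun x => x ^ k) ∧
        iteratedDeriv (2 * k - 1) Fs 0 / (Nat.factorial (2 * k - 1)) = 0 ∧
        (∃ ε > (0:ℝ), ∀ x : ℝ, |x| < ε → Fs (x - h * F x) = F x) ∧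
        ∃ U : Set (ℂ × ℂ), IsOpen U ∧ ((0 : ℂ), (0 : ℂ)) ∈ U ∧
          ∀ p ∈ TubeAll F ∩ U,
            (p.1 + Complex.I * (h : ℂ) * p.2, p.2) ∈ TubeAll Fs := by
  intro a h ha hh
  obtain ⟨pF, hpF⟩ := id hFan
  set n := 2 * k - 1 with hn
  have hkn : k ≤ n := by omega
  have hn2k : n + 1 = 2 * k := by omega
  have hkR : (k : ℝ) ≠ 0 := by positivity
  -- Taylor coefficients of F up to k
  have hsumxk : ∀ (x : ℝ), ∑ i ∈ range (k+1), (if i = k then (1:ℝ) else 0) * x ^ i = x ^ k := by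
    intro x
    have hterm : ∀ i ∈ range (k+1), (if i = k then (1:ℝ) else 0) * x ^ i
        = if i = k then x ^ i else 0 := by
      intro i _; split <;> simp
    rw [Finset.sum_congr rfl hterm, Finset.sum_ite_eq' (range (k+1)) k (fun i => x ^ i)]
    simp
  have hFcoeff : ∀ i ≤ k, pF.coeff i = if i = k then (1:ℝ) else 0 := by
    apply coeff_match hpF k
    refine hFk.congr' ?_ (by rfl)
    filter_upwards with x
    rw [hsumxk x]
  have hF0 : F 0 = 0 := by
    have h1 : F 0 = pF.coeff 0 := (hpF.coeff_zero fun _ => 1).symm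
    rw [h1, hFcoeff 0 (by omega), if_neg (by omega : ¬ (0 = k))]
  have hderivF : deriv F 0 = 0 := by
    have h1 : deriv F 0 = pF.coeff 1 := hpF.deriv
    rw [h1, hFcoeff 1 (by omega), if_neg (by omega : ¬ (1 = k))]
  have han : a = pF.coeff n := by
    rw [ha, coeff_eq_iteratedDeriv hpF n, nsmul_eq_mul]
    field_simp
  -- big-O facts for F
  have hFO : F =O[𝓝 (0:ℝ)] fun x => x ^ k := by
    have h1 := hFk.isBigO.add (isBigO_refl (fun x : ℝ => x ^ k) (𝓝 0))
    refine h1.congr' ?_ (by rfl)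
    filter_upwards with x
    ring
  -- the shear map and its inverse
  set vph : ℝ → ℝ := fun x => x - h * F x with hvph
  have hvphan : AnalyticAt ℝ vph 0 := (analyticAt_id).sub (analyticAt_const.mul hFan)
  have hvph0 : vph 0 = 0 := by simp [hvph, hF0]
  have hvphd : HasDerivAt vph 1 0 := by
    have h1 : HasDerivAt F (deriv F 0) 0 := hFan.differentiableAt.hasDerivAt
    have h2 := (hasDerivAt_id (0:ℝ)).sub (h1.const_mul h)
    rw [hderivF] at h2
    simp at h2; exact h2
  obtain ⟨vps, hvpsan, hLeft⟩ := analytic_local_inverse vph hvphan hvph0 hvphd.deriv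
  have hvps0 : vps 0 = 0 := by
    have h1 := hLeft.self_of_nhds
    rwa [hvph0] at h1
  set Fs : ℝ → ℝ := fun x => F (vps x) with hFs
  have hFsan : AnalyticAt ℝ Fs 0 := by
    have h1 : AnalyticAt ℝ F (vps 0) := by rw [hvps0]; exact hFan
    exact h1.comp hvpsan
  -- derivative of the inverse
  have hvpsd : HasDerivAt vps 1 0 := by
    have h1 : HasDerivAt vps (deriv vps 0) 0 := hvpsan.differentiableAt.hasDerivAt
    have h2 : HasDerivAt vps (deriv vps 0) (vph 0) := hvph0.symm ▸ h1
    have h3 : HasDerivAt (vps ∘ vph) (deriv vps 0 * 1) 0 := h2.comp 0 hvphd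
    have h4 : HasDerivAt (fun x : ℝ => x) (deriv vps 0 * 1) 0 :=
      h3.congr_of_eventuallyEq (by filter_upwards [hLeft] with x hx; exact hx.symm)
    have h5 := h4.unique (hasDerivAt_id 0)
    rw [mul_one] at h5
    rwa [← h5]
  have hvpssub : (fun x => vps x - x) =o[𝓝 (0:ℝ)] fun x => x := by
    have h1 := hvpsd.isLittleO
    simpa [hvps0] using h1
  have hvpsO : vps =O[𝓝 (0:ℝ)] fun x => x := by
    have h1 := hvpssub.isBigO.add (isBigO_refl (fun x : ℝ => x) (𝓝 0))
    refine h1.congr' ?_ (by rfl)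
    filter_upwards with x
    ring
  -- Fs x - x^k = o(x^k)
  have htend : Tendsto vps (𝓝 (0:ℝ)) (𝓝 (0:ℝ)) := by
    have := hvpsan.continuousAt
    rwa [ContinuousAt, hvps0] at this
  have hFsk : (fun x => Fs x - x ^ k) =o[𝓝 (0:ℝ)] fun x => x ^ k := by
    have h1 : (fun x => F (vps x) - (vps x) ^ k) =o[𝓝 (0:ℝ)] fun x => (vps x) ^ k :=
      hFk.comp_tendsto htend
    have h2 : (fun x => (vps x) ^ k) =O[𝓝 (0:ℝ)] fun x => x ^ k := hvpsO.pow k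
    have h3 := h1.trans_isBigO h2
    have hsum : (fun x : ℝ => ∑ i ∈ range k, (vps x) ^ i * x ^ (k-1-i)) =O[𝓝 (0:ℝ)]
        fun x => x ^ (k-1) := by
      refine IsBigO.fun_sum fun i hi => ?_
      have hik : i ≤ k - 1 := by simp at hi; omega
      have h4 := (hvpsO.pow i).mul (isBigO_refl (fun x : ℝ => x ^ (k-1-i)) (𝓝 0))
      refine h4.trans (IsBigO.of_bound 1 ?_)
      filter_upwards with x
      rw [← pow_add, (by omega : i + (k-1-i) = k - 1)]
      simp
    have h5 := hsum.mul_isLittleO hvpssub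
    have h6 : (fun x => (vps x) ^ k - x ^ k) =o[𝓝 (0:ℝ)] fun x => x ^ k := by
      refine (h5.congr' ?_ ?_)
      · filter_upwards with x
        exact geom_sum₂_mul (vps x) x k
      · filter_upwards with x
        rw [← pow_succ, (by omega : k - 1 + 1 = k)]
    have h7 := h3.add h6
    refine h7.congr' ?_ (by rfl)
    filter_upwards with x
    show F (vps x) - vps x ^ k + (vps x ^ k - x ^ k) = Fs x - x ^ k
    ring
  -- coefficients of Fs up to k
  obtain ⟨q, hq⟩ := id hFsan
  have hFscoeff : ∀ i ≤ k, q.coeff i = if i = k then (1:ℝ) else 0 := by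
    apply coeff_match hq k
    refine hFsk.congr' ?_ (by rfl)
    filter_upwards with x
    rw [hsumxk x]
  -- the functional equation
  have heq : ∀ᶠ x in 𝓝 (0:ℝ), Fs (vph x) = F x := by
    filter_upwards [hLeft] with x hx
    show F (vps (vph x)) = F x
    rw [hx]
  -- main asymptotic chain
  set δ : ℝ → ℝ := fun x => -(h * F x) with hδ
  have hδO : δ =O[𝓝 (0:ℝ)] fun x => x ^ k := (hFO.const_mul_left h).neg_left
  have hT := taylor_littleO hpF n
  have hQtaylor := taylor_littleO hq n
  set T : ℝ → ℝ := fun x => ∑ i ∈ range (n+1), pF.coeff i * x ^ i with hTdef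
  set Q : ℝ → ℝ := fun x => ∑ i ∈ range (n+1), q.coeff i * x ^ i with hQdef
  have hvphO : vph =O[𝓝 (0:ℝ)] fun x => x := by
    have h1 : (fun x => h * F x) =O[𝓝 (0:ℝ)] fun x => x := by
      refine (hFO.const_mul_left h).trans ?_
      have := pow_bigO_pow (by omega : 1 ≤ k)
      simpa using this
    exact (isBigO_refl (fun x : ℝ => x) (𝓝 0)).sub h1
  have hvphtend : Tendsto vph (𝓝 (0:ℝ)) (𝓝 (0:ℝ)) := by
    have := hvphan.continuousAt
    rwa [ContinuousAt, hvph0] at this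
  have hQvph : (fun x => Fs (vph x) - Q (vph x)) =o[𝓝 (0:ℝ)] fun x => x ^ n := by
    have h1 := hQtaylor.comp_tendsto hvphtend
    exact h1.trans_isBigO (hvphO.pow n)
  have chain1 : (fun x => F x - Q (vph x)) =o[𝓝 (0:ℝ)] fun x => x ^ n := by
    refine hQvph.congr' ?_ (by rfl)
    filter_upwards [heq] with x hx
    rw [hx]
  -- expansion of Q ∘ vph
  obtain ⟨S, hScont, hSid⟩ := poly_taylor2 n q.coeff
  set Q' : ℝ → ℝ := fun x => ∑ i ∈ range (n+1), (i : ℝ) * q.coeff i * x ^ (i-1) with hQ'def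
  have hδcont : ContinuousAt δ 0 := (continuousAt_const.mul hFan.continuousAt).neg
  have hSO : (fun x => S (x, δ x)) =O[𝓝 (0:ℝ)] fun _ => (1:ℝ) := by
    have h1 : Tendsto (fun x : ℝ => (x, δ x)) (𝓝 0) (𝓝 (0, δ 0)) :=
      (continuousAt_id.prodMk hδcont).tendsto
    exact ((hScont.tendsto _).comp h1).isBigO_one ℝ
  have hrem : (fun x => (δ x) ^ 2 * S (x, δ x)) =o[𝓝 (0:ℝ)] fun x => x ^ n := by
    have h1 : (fun x => (δ x) ^ 2) =O[𝓝 (0:ℝ)] fun x => x ^ (2*k) := by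
      have := hδO.mul hδO
      refine (IsBigO.congr' this ?_ ?_)
      · filter_upwards with x; ring
      · filter_upwards with x; rw [← pow_add]; congr 1; omega
    have h2 := h1.mul hSO
    have h3 : (fun x : ℝ => x ^ (2*k) * 1) =O[𝓝 (0:ℝ)] fun x : ℝ => x ^ (2*k) := by
      simp [isBigO_refl]
    exact (h2.trans h3).trans_isLittleO (pow_littleO_pow (by omega))
  have hA : (fun x => Q (vph x) - Q x - δ x * Q' x) =o[𝓝 (0:ℝ)] fun x => x ^ n := by
    refine hrem.congr' ?_ (by rfl)
    filter_upwards with x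
    have h1 : vph x = x + δ x := by simp [hvph, hδ]; ring
    have h2 : Q (vph x) = Q x + δ x * Q' x + (δ x) ^ 2 * S (x, δ x) := by
      rw [h1]
      exact hSid x (δ x)
    rw [h2]; ring
  -- analysis of Q'
  set r : ℝ → ℝ := fun x => ∑ i ∈ Ico (k+1) (n+1), (i : ℝ) * q.coeff i * x ^ (i-1) with hrdef
  have hQ'split : ∀ x : ℝ, Q' x = k * x ^ (k-1) + r x := by
    intro x
    have h1 : Q' x = ∑ i ∈ Ico k (n+1), (i : ℝ) * q.coeff i * x ^ (i-1) := by
      rw [hQ'def]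
      refine (Finset.sum_subset ?_ ?_).symm
      · intro i hi
        simp at hi ⊢
        omega
      · intro i hi1 hi2
        simp at hi1 hi2
        have hik : i < k := by omega
        rw [hFscoeff i (by omega), if_neg (by omega : ¬ (i = k))]
        ring
    rw [h1, Finset.sum_eq_sum_Ico_succ_bot (by omega : k < n + 1)]
    rw [hFscoeff k le_rfl]
    simp
    rfl
  have hrO : r =O[𝓝 (0:ℝ)] fun x => x ^ k := by
    apply sum_monomial_bigO
    intro i hi
    simp at hi
    omega
  -- claim B
  have hA1 : (fun x => (F x - x ^ k) * ((k:ℝ) * x ^ (k-1))) =o[𝓝 (0:ℝ)] fun x => x ^ n := by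
    have h1 : (fun x : ℝ => (k:ℝ) * x ^ (k-1)) =O[𝓝 (0:ℝ)] fun x => x ^ (k-1) :=
      (isBigO_refl (fun x : ℝ => x ^ (k-1)) (𝓝 0)).const_mul_left _
    have h2 := hFk.mul_isBigO h1
    refine h2.trans_isBigO (IsBigO.of_bound 1 ?_)
    filter_upwards with x
    rw [← pow_add, (by omega : k + (k-1) = n)]
    simp
  have hA2 : (fun x => F x * r x) =o[𝓝 (0:ℝ)] fun x => x ^ n := by
    have h1 := hFO.mul hrO
    have h2 : (fun x : ℝ => x ^ k * x ^ k) =O[𝓝 (0:ℝ)] fun x => x ^ (2*k) := by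
      refine IsBigO.of_bound 1 ?_
      filter_upwards with x
      rw [← pow_add, (by omega : k + k = 2*k)]
      simp
    exact (h1.trans h2).trans_isLittleO (pow_littleO_pow (by omega))
  have hB : (fun x => δ x * Q' x + h * k * x ^ n) =o[𝓝 (0:ℝ)] fun x => x ^ n := by
    have h1 := (hA1.const_mul_left (-h)).add (hA2.const_mul_left (-h))
    refine h1.congr' ?_ (by rfl)
    filter_upwards with x
    rw [hQ'split x]
    have hxk : x ^ k * x ^ (k - 1) = x ^ n := by
      rw [← pow_add]; congr 1; omega
    simp only [hδ]
    ring_nf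
    rw [← hxk]
    ring
  -- combine
  have hQvphQ : (fun x => Q (vph x) - (Q x - h * k * x ^ n)) =o[𝓝 (0:ℝ)] fun x => x ^ n := by
    have h1 := hA.add hB
    refine h1.congr' ?_ (by rfl)
    filter_upwards with x
    ring
  have hfinal : (fun x => (Q x - h * k * x ^ n) - T x) =o[𝓝 (0:ℝ)] fun x => x ^ n := by
    have h1 := (hT.sub chain1).sub hQvphQ
    refine h1.congr' ?_ (by rfl)
    filter_upwards with x
    ring
  -- extract coefficient
  set d : ℕ → ℝ := fun i => q.coeff i - pF.coeff i - (if i = n then h * k else 0) with hddef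
  have hpoly : ∀ x : ℝ, (Q x - h * k * x ^ n) - T x = ∑ i ∈ range (n+1), d i * x ^ i := by
    intro x
    have h1 : ∑ i ∈ range (n+1), (if i = n then h * (k:ℝ) else 0) * x ^ i = h * k * x ^ n := by
      have hterm : ∀ i ∈ range (n+1), (if i = n then h * (k:ℝ) else 0) * x ^ i
          = if i = n then h * (k:ℝ) * x ^ i else 0 := by
        intro i _; split <;> simp
      rw [Finset.sum_congr rfl hterm, Finset.sum_ite_eq' (range (n+1)) n (fun i => h * (k:ℝ) * x ^ i)]
      simp
    rw [hQdef, hTdef]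
    simp only [hddef]
    rw [← h1, ← Finset.sum_sub_distrib, ← Finset.sum_sub_distrib]
    refine Finset.sum_congr rfl fun i _ => by ring
  have hdvanish : ∀ i ≤ n, d i = 0 := by
    apply polyvanish
    have h2 : (fun x : ℝ => ∑ i ∈ range (n+1), d i * x ^ i) =o[𝓝 (0:ℝ)] fun x => x ^ n := by
      refine hfinal.congr' ?_ (by rfl)
      filter_upwards with x
      rw [hpoly x]
    exact h2.mono nhdsWithin_le_nhds
  have hcn : q.coeff n = 0 := by
    have h1 := hdvanish n le_rfl
    simp only [hddef, if_pos rfl] at h1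
    have h2 : h * k = -a := by
      rw [hh]
      field_simp
    rw [h2, ← han] at h1
    simp only [if_true] at h1
    linarith
  -- assemble the statement
  refine ⟨Fs, hFsan, hFsk, ?_, ?_, ?_⟩
  · rw [coeff_eq_iteratedDeriv hq n, hcn]
    simp
  · -- epsilon neighborhood
    rw [Metric.eventually_nhds_iff] at heq
    obtain ⟨ε, hε, hball⟩ := heq
    refine ⟨ε, hε, fun x hx => ?_⟩
    have h1 : dist x 0 < ε := by rwa [Real.dist_eq, sub_zero]
    exact hball h1
  · -- the tube map
    rw [Metric.eventually_nhds_iff] at heq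
    obtain ⟨ε, hε, hball⟩ := heq
    refine ⟨{p : ℂ × ℂ | |p.1.re| < ε}, ?_, by simpa using hε, ?_⟩
    · have : Continuous fun p : ℂ × ℂ => |p.1.re| :=
        (Complex.continuous_re.comp continuous_fst).abs
      exact isOpen_lt this continuous_const
    · rintro p ⟨hp1, hp2⟩
      simp only [Set.mem_setOf_eq] at hp1 hp2
      show p.2.im = Fs ((p.1 + Complex.I * (h:ℂ) * p.2).re)
      have h1 : (p.1 + Complex.I * (h:ℂ) * p.2).re = p.1.re - h * p.2.im := by
        simp
        ring
      rw [h1, hp1]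
      have h2 : dist (p.1.re) (0:ℝ) < ε := by rwa [Real.dist_eq, sub_zero]
      have h3 := hball h2
      show F (p.1.re) = Fs (vph (p.1.re))
      exact h3.symm
end
end
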